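/- Let $(X_n)_{n \ge 0}$ be a stochastic process adapted to a filtration $(\mathcal{F}_n)$ with $X_n \ge 0$, and let $T := \inf\{n : X_n \text{ leaves the nonnegative region}\}$ be a stopping time. Suppose there exist $\epsilon > 0$ and $K \le 0$ such that on $\{T > n\}$, $\mathbb{E}[X_{n+1} \mid \mathcal{F}_n] \le X_n - \epsilon$, and $K \le X_T \le 0$ on $\{T < \infty\}$. Then $\mathbb{E}[T] \le \frac{X_0 - K}{\epsilon}$. -/

import Mathlib

open MeasureTheory
open scoped ENNReal

/-- Ranking-supermartingale bound on the expected stopping time (Theorem 5.3 / C.1). -/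
theorem stmt5 {Ω : Type*} {m : MeasurableSpace Ω} (μ : Measure Ω) [IsProbabilityMeasure μ]
    (ℱ : Filtration ℕ m) (X : ℕ → Ω → ℝ) (hadapted : Adapted ℱ X)
    (hint : ∀ n, Integrable (X n) μ)
    (T : Ω → ℕ∞) (hT : ∀ n : ℕ, MeasurableSet[ℱ n] {ω | T ω ≤ (n : ℕ∞)})
    (x0 : ℝ) (hX0 : ∀ ω, X 0 ω = x0)
    (ε K : ℝ) (hε : 0 < ε) (hK : K ≤ 0)
    (hnonneg : ∀ n : ℕ, ∀ᵐ ω ∂μ, (n : ℕ∞) < T ω → 0 ≤ X n ω)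
    (hdec : ∀ n : ℕ, ∀ᵐ ω ∂μ, (n : ℕ∞) < T ω → (μ[X (n + 1)|ℱ n]) ω ≤ X n ω - ε)
    (hterm : ∀ᵐ ω ∂μ, T ω < ⊤ → K ≤ X (T ω).toNat ω ∧ X (T ω).toNat ω ≤ 0) :
    ∫⁻ ω, (T ω).toENNReal ∂μ ≤ ENNReal.ofReal ((x0 - K) / ε) := by
  classical
  -- the stopped process
  set Z : ℕ → Ω → ℝ := fun n ω => if T ω ≤ (n : ℕ∞) then X (T ω).toNat ω else X n ω with hZdef
  have hsets : ∀ n : ℕ, MeasurableSet {ω | T ω ≤ (n : ℕ∞)} := fun n => ℱ.le n _ (hT n)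
  have hmeaslt : ∀ n : ℕ, MeasurableSet {ω | (n : ℕ∞) < T ω} := by
    intro n
    have : {ω | (n : ℕ∞) < T ω} = {ω | T ω ≤ (n : ℕ∞)}ᶜ := by
      ext ω; simp [not_le]
    rw [this]; exact (hsets n).compl
  have hmeaseq : ∀ k : ℕ, MeasurableSet {ω | T ω = (k : ℕ∞)} := by
    intro k
    cases k with
    | zero =>
        have : {ω | T ω = ((0 : ℕ) : ℕ∞)} = {ω | T ω ≤ ((0 : ℕ) : ℕ∞)} := by
          ext ω; simp [le_zero_iff]
        rw [this]; exact hsets 0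
    | succ k =>
        have : {ω | T ω = ((k + 1 : ℕ) : ℕ∞)} =
            {ω | T ω ≤ ((k + 1 : ℕ) : ℕ∞)} ∩ {ω | T ω ≤ (k : ℕ∞)}ᶜ := by
          ext ω
          simp only [Set.mem_setOf_eq, Set.mem_inter_iff, Set.mem_compl_iff]
          cases h : T ω with
          | top => simp [eq_comm]
          | coe a =>
              simp only [Nat.cast_le, Nat.cast_inj]
              omega
        rw [this]; exact (hsets (k + 1)).inter (hsets k).compl
  -- representation of Z as finite combination
  have hZrep : ∀ n : ℕ, Z n = fun ω =>
      (∑ k ∈ Finset.range (n + 1), Set.indicator {ω | T ω = (k : ℕ∞)} (X k) ω) +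
        Set.indicator {ω | (n : ℕ∞) < T ω} (X n) ω := by
    intro n
    funext ω
    simp only [hZdef, Set.indicator_apply, Set.mem_setOf_eq]
    by_cases htop : T ω = ⊤
    · simp only [htop]
      have : ∀ k ∈ Finset.range (n + 1), (if (⊤ : ℕ∞) = (k : ℕ∞) then X k ω else 0) = 0 := by
        intro k _
        simp
      rw [Finset.sum_congr rfl this]
      simp
    · obtain ⟨a, ha0⟩ := WithTop.ne_top_iff_exists.1 htop
      have ha : ((a : ℕ) : ℕ∞) = T ω := ha0
      simp only [← ha, Nat.cast_le, Nat.cast_lt, Nat.cast_inj, ENat.toNat_coe,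
        Finset.sum_ite_eq, Finset.mem_range]
      by_cases hle : a ≤ n
      · have h1 : a < n + 1 := by omega
        simp [hle, h1, not_lt.2 hle]
      · have h1 : ¬ a < n + 1 := by omega
        simp [hle, h1, not_le.1 hle]
  have hZint : ∀ n : ℕ, Integrable (Z n) μ := by
    intro n
    rw [hZrep n]
    apply Integrable.add
    · apply integrable_finset_sum
      intro k _
      exact (hint k).indicator (hmeaseq k)
    · exact (hint n).indicator (hmeaslt n)
  -- key one-step inequality
  have key : ∀ n : ℕ, ∫ ω, Z (n + 1) ω ∂μ ≤
      ∫ ω, Z n ω ∂μ - ε * (μ {ω | (n : ℕ∞) < T ω}).toReal := by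
    intro n
    set A : Set Ω := {ω | T ω ≤ (n : ℕ∞)} with hAdef
    set B : Set Ω := {ω | (n : ℕ∞) < T ω} with hBdef
    have hAB : Aᶜ = B := by ext ω; simp [hAdef, hBdef, not_le]
    have hA : MeasurableSet A := hsets n
    have hB : MeasurableSet B := hmeaslt n
    have hsplit : ∀ k : ℕ, Integrable (Z k) μ →
        ∫ ω, Z k ω ∂μ = ∫ ω in A, Z k ω ∂μ + ∫ ω in B, Z k ω ∂μ := by
      intro k hk
      rw [← hAB]
      exact (integral_add_compl hA hk).symm
    have hZA : ∀ ω ∈ A, Z (n + 1) ω = Z n ω := by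
      intro ω hω
      have h1 : T ω ≤ (n : ℕ∞) := hω
      have h2 : T ω ≤ ((n + 1 : ℕ) : ℕ∞) := le_trans h1 (Nat.cast_le.2 (Nat.le_succ n))
      simp only [hZdef]
      rw [if_pos h2, if_pos h1]
    have hZB : ∀ ω ∈ B, Z (n + 1) ω = X (n + 1) ω := by
      intro ω hω
      have h1 : (n : ℕ∞) < T ω := hω
      simp only [hZdef]
      by_cases h2 : T ω ≤ ((n + 1 : ℕ) : ℕ∞)
      · have hne : T ω ≠ ⊤ := fun hh => by
          rw [hh, top_le_iff] at h2
          exact (ENat.coe_ne_top (n + 1)) h2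
        obtain ⟨a, ha0⟩ := WithTop.ne_top_iff_exists.1 hne
        have ha : ((a : ℕ) : ℕ∞) = T ω := ha0
        have h3 : n < a := by rw [← ha] at h1; exact_mod_cast h1
        have h4 : a ≤ n + 1 := by rw [← ha] at h2; exact_mod_cast h2
        have h5 : a = n + 1 := by omega
        rw [if_pos h2, ← ha, ENat.toNat_coe, h5]
      · rw [if_neg h2]
    have hZnB : ∀ ω ∈ B, Z n ω = X n ω := by
      intro ω hω
      have h1 : (n : ℕ∞) < T ω := hω
      simp only [hZdef]
      rw [if_neg (not_le.2 h1)]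
    have e1 : ∫ ω in A, Z (n + 1) ω ∂μ = ∫ ω in A, Z n ω ∂μ :=
      setIntegral_congr_fun hA hZA
    have e2 : ∫ ω in B, Z (n + 1) ω ∂μ = ∫ ω in B, X (n + 1) ω ∂μ :=
      setIntegral_congr_fun hB hZB
    have e3 : ∫ ω in B, X (n + 1) ω ∂μ = ∫ ω in B, (μ[X (n + 1)|ℱ n]) ω ∂μ := by
      have hBf : MeasurableSet[ℱ n] B := by
        have : B = {ω | T ω ≤ (n : ℕ∞)}ᶜ := by ext ω; simp [hBdef, not_le]
        rw [this]; exact (hT n).compl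
      exact (setIntegral_condExp (ℱ.le n) (hint (n + 1)) hBf).symm
    have e4 : ∫ ω in B, (μ[X (n + 1)|ℱ n]) ω ∂μ ≤ ∫ ω in B, (X n ω - ε) ∂μ := by
      apply setIntegral_mono_ae_restrict
      · exact integrable_condExp.integrableOn
      · exact ((hint n).sub (integrable_const ε)).integrableOn
      · show ∀ᵐ ω ∂(μ.restrict B), (μ[X (n + 1)|ℱ n]) ω ≤ X n ω - ε
        rw [ae_restrict_iff' hB]
        filter_upwards [hdec n] with ω hω hmem
        exact hω hmem
    have e5 : ∫ ω in B, (X n ω - ε) ∂μ = ∫ ω in B, X n ω ∂μ - ε * (μ B).toReal := by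
      rw [integral_sub (hint n).integrableOn (integrable_const ε).integrableOn]
      rw [setIntegral_const]
      ring_nf
      simp [mul_comm, measureReal_def]
    have e6 : ∫ ω in B, X n ω ∂μ = ∫ ω in B, Z n ω ∂μ :=
      (setIntegral_congr_fun hB hZnB).symm
    have h1 := hsplit (n + 1) (hZint (n + 1))
    have h2 := hsplit n (hZint n)
    rw [h1, h2, e1, e2, e3]
    linarith [e4, e5, e6]
  -- lower bound on E[Z n]
  have lowZ : ∀ n : ℕ, K ≤ ∫ ω, Z n ω ∂μ := by
    intro n
    have hae : ∀ᵐ ω ∂μ, K ≤ Z n ω := by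
      filter_upwards [hnonneg n, hterm] with ω h1 h2
      by_cases h : T ω ≤ (n : ℕ∞)
      · have hfin : T ω < ⊤ := lt_of_le_of_lt h (WithTop.coe_lt_top n)
        simp only [hZdef]
        rw [if_pos h]
        exact (h2 hfin).1
      · simp only [hZdef]
        rw [if_neg h]
        exact le_trans hK (h1 (not_le.1 h))
    calc K = ∫ _ : Ω, K ∂μ := by simp
    _ ≤ ∫ ω, Z n ω ∂μ := integral_mono_ae (integrable_const K) (hZint n) hae
  -- E[Z 0] = x0
  have hZ0 : ∫ ω, Z 0 ω ∂μ = x0 := by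
    have : Z 0 = fun _ => x0 := by
      funext ω
      by_cases h : T ω ≤ ((0 : ℕ) : ℕ∞)
      · have h0 : T ω = 0 := by simpa [le_zero_iff] using h
        simp only [hZdef]
        rw [if_pos h, h0]
        simp [hX0]
      · simp only [hZdef]
        rw [if_neg h]
        exact hX0 ω
    rw [this]
    simp
  -- induction: E[Z N] + ε * ∑ ≤ x0
  have bound : ∀ N : ℕ, ∫ ω, Z N ω ∂μ +
      ε * ∑ k ∈ Finset.range N, (μ {ω | (k : ℕ∞) < T ω}).toReal ≤ x0 := by
    intro N
    induction N with
    | zero => simp [hZ0]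
    | succ N ih =>
        have hk := key N
        rw [Finset.sum_range_succ, mul_add]
        linarith
  have sumbound : ∀ N : ℕ,
      ∑ k ∈ Finset.range N, (μ {ω | (k : ℕ∞) < T ω}).toReal ≤ (x0 - K) / ε := by
    intro N
    rw [le_div_iff₀ hε]
    have := bound N
    have := lowZ N
    nlinarith [mul_comm ε (∑ k ∈ Finset.range N, (μ {ω | (k : ℕ∞) < T ω}).toReal)]
  -- layer-cake for ℕ∞-valued T
  have layer : ∫⁻ ω, (T ω).toENNReal ∂μ = ∑' n : ℕ, μ {ω | (n : ℕ∞) < T ω} := by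
    have pt : ∀ ω, (T ω).toENNReal =
        ∑' n : ℕ, Set.indicator {ω | (n : ℕ∞) < T ω} (fun _ => (1 : ℝ≥0∞)) ω := by
      intro ω
      cases h : T ω with
      | top =>
          have : ∀ n : ℕ, Set.indicator {ω | (n : ℕ∞) < T ω} (fun _ => (1 : ℝ≥0∞)) ω = 1 := by
            intro n
            simp [Set.indicator_apply, Set.mem_setOf_eq, h]
          rw [tsum_congr this]
          simp [ENNReal.tsum_const_eq_top_of_ne_zero]
      | coe a =>
          have hterm' : ∀ n : ℕ, Set.indicator {ω | (n : ℕ∞) < T ω} (fun _ => (1 : ℝ≥0∞)) ω =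
              if n ∈ Finset.range a then 1 else 0 := by
            intro n
            simp [Set.indicator_apply, Set.mem_setOf_eq, h, Nat.cast_lt, Finset.mem_range]
          rw [tsum_congr hterm',
            tsum_eq_sum (s := Finset.range a) (fun b hb => if_neg hb),
            Finset.sum_congr rfl (fun b hb => if_pos hb),
            Finset.sum_const, Finset.card_range]
          simp
    calc ∫⁻ ω, (T ω).toENNReal ∂μ
        = ∫⁻ ω, ∑' n : ℕ, Set.indicator {ω | (n : ℕ∞) < T ω} (fun _ => (1 : ℝ≥0∞)) ω ∂μ := by
          exact lintegral_congr pt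
      _ = ∑' n : ℕ, ∫⁻ ω, Set.indicator {ω | (n : ℕ∞) < T ω} (fun _ => (1 : ℝ≥0∞)) ω ∂μ := by
          apply lintegral_tsum
          intro n
          exact (measurable_const.indicator (hmeaslt n)).aemeasurable
      _ = ∑' n : ℕ, μ {ω | (n : ℕ∞) < T ω} := by
          apply tsum_congr
          intro n
          rw [lintegral_indicator (hmeaslt n)]
          simp
  rw [layer]
  -- bound the tsum
  apply ENNReal.summable.tsum_le_of_sum_le
  intro s
  have hsub : s ⊆ Finset.range (s.sup id + 1) := Finset.subset_range_sup_succ s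
  calc ∑ k ∈ s, μ {ω | (k : ℕ∞) < T ω}
      ≤ ∑ k ∈ Finset.range (s.sup id + 1), μ {ω | (k : ℕ∞) < T ω} :=
        Finset.sum_le_sum_of_subset hsub
    _ ≤ ENNReal.ofReal ((x0 - K) / ε) := by
        have hconv : ∑ k ∈ Finset.range (s.sup id + 1), μ {ω | (k : ℕ∞) < T ω} =
            ENNReal.ofReal (∑ k ∈ Finset.range (s.sup id + 1),
              (μ {ω | (k : ℕ∞) < T ω}).toReal) := by
          rw [ENNReal.ofReal_sum_of_nonneg (fun k _ => ENNReal.toReal_nonneg)]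
          apply Finset.sum_congr rfl
          intro k _
          rw [ENNReal.ofReal_toReal (measure_ne_top μ _)]
        rw [hconv]
        exact ENNReal.ofReal_le_ofReal (sumbound _)
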